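/- (Theorem 3, uniform exponential stability, in integral-equation form.) Assume w₀(0) = 0, w_j(0,0) = 0, u₀(0) = 0, the Lipschitz conditions |w₀(v) − w₀(v')| ≤ l₀√(2m)·‖v − v'‖, |w_j(a,b) − w_j(a',b')| ≤ l_j·(|a − a'| + |b − b'|), |u₀(z) − u₀(z')| ≤ l_J·|z − z'|, and that both Λ_σ := √( c₀(σ)² + Σ_{j=1}^m c_j(σ)² ) < 1 and Λ₀ := √( c₀(0)² + Σ_{j=1}^m c_j(0)² ) < 1, where c₀(τ) = l₀√(2m)/(k₀−τ) + l_J·e^{(k₀−τ)ω}/(1 − e^{−(k₀−τ)ω}) and c_j(τ) = 2l_j/(k_j−τ). Then for every ε > 0 there exists δ > 0 such that: every bounded measurable v : [0,∞) → ℝ^{m+1} satisfying v = Πv pointwise on [0,∞) (with initial vector v⁰ = v(0)) and ‖v(0)‖ < δ satisfies ‖v(t)‖ ≤ ε·e^{−σt} for all t ≥ 0. -/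

import Mathlib

/-- The Euclidean norm on `Fin n → ℝ`. -/
noncomputable def eNorm {n : ℕ} (v : Fin n → ℝ) : ℝ := Real.sqrt (∑ j, v j ^ 2)

/-- The operator `Π` from the proof of Theorem 3: coordinate `0` gets
`(Πψ)₀(t) = e^{−k₀t}v⁰₀ + ∫₀^t e^{−k₀(t−s)} w₀(ψ(s)) ds
  + Σ_{0 ≤ θ_i < t} e^{−k₀(t−θ_i)} u₀(ψ₀(θ_i))`,
and the coordinates `j = 1,…,m` get
`(Πψ)_j(t) = e^{−k_jt}v⁰_j + ∫₀^t e^{−k_j(t−s)} w_j(ψ₀(s), ψ_j(s)) ds`. -/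
noncomputable def PiOp (m : ℕ) (θ : ℤ → ℝ) (k : Fin (m + 1) → ℝ)
    (w₀ : (Fin (m + 1) → ℝ) → ℝ) (w : Fin (m + 1) → ℝ → ℝ → ℝ) (u₀ : ℝ → ℝ)
    (v0 : Fin (m + 1) → ℝ) (ψ : ℝ → Fin (m + 1) → ℝ) : ℝ → Fin (m + 1) → ℝ := fun t j =>
  if j = 0 then
    Real.exp (-(k 0) * t) * v0 0
      + (∫ s in (0:ℝ)..t, Real.exp (-(k 0) * (t - s)) * w₀ (ψ s))
      + ∑' i : ℤ, (if 0 ≤ θ i ∧ θ i < t then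
          Real.exp (-(k 0) * (t - θ i)) * u₀ (ψ (θ i) 0) else 0)
  else
    Real.exp (-(k j) * t) * v0 j
      + ∫ s in (0:ℝ)..t, Real.exp (-(k j) * (t - s)) * w j (ψ s 0) (ψ s j)

section helpers

lemma eNorm_nonneg {n : ℕ} (v : Fin n → ℝ) : 0 ≤ eNorm v := Real.sqrt_nonneg _

lemma eNorm_eq {n : ℕ} (v : Fin n → ℝ) : eNorm v = ‖(WithLp.toLp 2 v : EuclideanSpace ℝ (Fin n))‖ := by
  rw [EuclideanSpace.norm_eq]
  simp [eNorm, sq_abs]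

lemma eNorm_add_le {n : ℕ} (b c : Fin n → ℝ) :
    eNorm (fun j => b j + c j) ≤ eNorm b + eNorm c := by
  rw [eNorm_eq, eNorm_eq, eNorm_eq]
  exact norm_add_le (WithLp.toLp 2 b : EuclideanSpace ℝ (Fin n)) (WithLp.toLp 2 c : EuclideanSpace ℝ (Fin n))

lemma eNorm_mono {n : ℕ} (a b : Fin n → ℝ) (h : ∀ j, |a j| ≤ b j) : eNorm a ≤ eNorm b := by
  apply Real.sqrt_le_sqrt
  apply Finset.sum_le_sum
  intro j _
  rw [← sq_abs (a j)]
  exact pow_le_pow_left₀ (abs_nonneg _) (h j) 2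

lemma eNorm_smul {n : ℕ} (x : ℝ) (v : Fin n → ℝ) :
    eNorm (fun j => x * v j) = |x| * eNorm v := by
  simp only [eNorm, mul_pow, ← Finset.mul_sum]
  rw [Real.sqrt_mul (sq_nonneg x), Real.sqrt_sq_eq_abs]

lemma eNorm_abs {n : ℕ} (v : Fin n → ℝ) : eNorm (fun j => |v j|) = eNorm v := by
  simp [eNorm, sq_abs]

lemma abs_le_eNorm {n : ℕ} (v : Fin n → ℝ) (j : Fin n) : |v j| ≤ eNorm v := by
  rw [← Real.sqrt_sq_eq_abs]
  exact Real.sqrt_le_sqrt (Finset.single_le_sum (f := fun j => v j ^ 2)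
    (fun i _ => sq_nonneg _) (Finset.mem_univ j))

lemma eNorm_le_add {n : ℕ} (a b c : Fin n → ℝ) (h : ∀ j, |a j| ≤ b j + c j) :
    eNorm a ≤ eNorm b + eNorm c :=
  le_trans (eNorm_mono a (fun j => b j + c j) h) (eNorm_add_le b c)

open MeasureTheory intervalIntegral

lemma intInt_of_bound (f : ℝ → ℝ) (hf : Measurable f) (a b C : ℝ)
    (h : ∀ s ∈ Set.uIoc a b, |f s| ≤ C) : IntervalIntegrable f volume a b := by
  rw [intervalIntegrable_iff]
  refine Integrable.mono' (integrableOn_const (C := C) ?_) hf.aestronglyMeasurable.restrict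
    ((ae_restrict_iff' measurableSet_uIoc).2 (ae_of_all _ fun s hs => by
      rw [Real.norm_eq_abs]; exact h s hs))
  exact measure_Ioc_lt_top.ne

lemma int_exp_bound (k σ t : ℝ) (hk : σ < k) (ht : 0 ≤ t) :
    ∫ s in (0:ℝ)..t, Real.exp (-k * (t - s)) * Real.exp (-σ * s) ≤ Real.exp (-σ * t) / (k - σ) := by
  have hc : (0:ℝ) < k - σ := by linarith
  have heq : ∀ s : ℝ, Real.exp (-k * (t - s)) * Real.exp (-σ * s)
      = Real.exp ((k - σ) * s - k * t) := by
    intro s; rw [← Real.exp_add]; ring_nf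
  have hderiv : ∀ s ∈ Set.uIcc (0:ℝ) t,
      HasDerivAt (fun s => Real.exp ((k - σ) * s - k * t) / (k - σ))
        (Real.exp (-k * (t - s)) * Real.exp (-σ * s)) s := by
    intro s _
    rw [heq s]
    have h1 : HasDerivAt (fun s : ℝ => (k - σ) * s - k * t) (k - σ) s := by
      simpa using ((hasDerivAt_id s).const_mul (k - σ)).sub_const (k * t)
    have h2 := (h1.exp).div_const (k - σ)
    have h3 : Real.exp ((k - σ) * s - k * t) * (k - σ) / (k - σ)
        = Real.exp ((k - σ) * s - k * t) := by
      field_simp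
    rw [h3] at h2
    exact h2
  have hint : IntervalIntegrable (fun s => Real.exp (-k * (t - s)) * Real.exp (-σ * s))
      volume 0 t := by
    apply Continuous.intervalIntegrable
    continuity
  rw [intervalIntegral.integral_eq_sub_of_hasDerivAt hderiv hint]
  have h1 : (k - σ) * t - k * t = -σ * t := by ring
  have h2 : (k - σ) * 0 - k * t = -k * t := by ring
  rw [h1, h2, div_sub_div_same, div_le_div_iff_of_pos_right hc]
  have : 0 < Real.exp (-k * t) := Real.exp_pos _
  linarith

lemma theta_notmem (ω : ℝ) (hω : 0 < ω) (θ : ℤ → ℝ)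
    (hθ : ∀ i : ℤ, (i : ℝ) * ω ≤ θ i ∧ θ i < ((i : ℝ) + 1) * ω)
    (t : ℝ) (i : ℤ) (hi : i ∉ Finset.Icc (0:ℤ) (⌈t/ω⌉ - 1)) :
    ¬(0 ≤ θ i ∧ θ i < t) := by
  rintro ⟨h0, hlt⟩
  obtain ⟨hlo, hhi⟩ := hθ i
  simp only [Finset.mem_Icc, not_and, not_le] at hi
  have hipos : 0 ≤ i := by
    by_contra hneg
    push_neg at hneg
    have : ((i:ℝ) + 1) * ω ≤ 0 := by
      apply mul_nonpos_of_nonpos_of_nonneg _ hω.le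
      have : (i:ℝ) ≤ -1 := by exact_mod_cast Int.le_of_lt_add_one (by omega : i < -1 + 1)
      linarith
    linarith
  have hlt2 : (i:ℝ) < t / ω := by
    rw [lt_div_iff₀ hω]
    calc (i:ℝ) * ω ≤ θ i := hlo
    _ < t := hlt
  have : i < ⌈t/ω⌉ := Int.lt_ceil.2 hlt2
  omega

lemma theta_sum_bound (ω : ℝ) (hω : 0 < ω) (θ : ℤ → ℝ)
    (hθ : ∀ i : ℤ, (i : ℝ) * ω ≤ θ i ∧ θ i < ((i : ℝ) + 1) * ω)
    (κ t : ℝ) (hκ : 0 < κ) :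
    ∑ i ∈ Finset.Icc (0:ℤ) (⌈t/ω⌉ - 1),
        (if 0 ≤ θ i ∧ θ i < t then Real.exp (-κ * (t - θ i)) else 0)
      ≤ Real.exp (κ * ω) / (1 - Real.exp (-(κ * ω))) := by
  set N : ℤ := ⌈t/ω⌉ - 1 with hN
  set r : ℝ := Real.exp (-(κ * ω)) with hr
  have hr0 : 0 ≤ r := Real.exp_nonneg _
  have hr1 : r < 1 := Real.exp_lt_one_iff.2 (by nlinarith)
  have hNt : (N:ℝ) * ω ≤ t := by
    have h1 : ((⌈t/ω⌉ : ℝ) - 1) < t / ω := by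
      have := Int.ceil_lt_add_one (t/ω)
      linarith
    have : (N:ℝ) < t / ω := by push_cast [hN]; linarith
    nlinarith [(lt_div_iff₀ hω).1 this]
  have hterm : ∀ i ∈ Finset.Icc (0:ℤ) N,
      (if 0 ≤ θ i ∧ θ i < t then Real.exp (-κ * (t - θ i)) else 0)
        ≤ Real.exp (κ * ω) * r ^ (N - i).toNat := by
    intro i hi
    simp only [Finset.mem_Icc] at hi
    have hNi : ((N - i).toNat : ℝ) = (N:ℝ) - (i:ℝ) := by
      have : ((N - i).toNat : ℤ) = N - i := Int.toNat_of_nonneg (by omega)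
      exact_mod_cast this
    split_ifs with hcond
    · obtain ⟨h0, hlt⟩ := hcond
      obtain ⟨hlo, hhi⟩ := hθ i
      have key : -κ * (t - θ i) ≤ κ * ω + ((N - i).toNat : ℝ) * (-(κ * ω)) := by
        rw [hNi]
        have h1 : t - θ i ≥ ((N:ℝ) - (i:ℝ) - 1) * ω := by nlinarith
        nlinarith
      calc Real.exp (-κ * (t - θ i)) ≤ Real.exp (κ * ω + ((N - i).toNat : ℝ) * (-(κ * ω))) :=
            Real.exp_le_exp.2 key
      _ = Real.exp (κ * ω) * r ^ (N - i).toNat := by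
            rw [Real.exp_add, Real.exp_nat_mul]
    · positivity
  calc ∑ i ∈ Finset.Icc (0:ℤ) N, (if 0 ≤ θ i ∧ θ i < t then Real.exp (-κ * (t - θ i)) else 0)
      ≤ ∑ i ∈ Finset.Icc (0:ℤ) N, Real.exp (κ * ω) * r ^ (N - i).toNat :=
        Finset.sum_le_sum hterm
    _ = Real.exp (κ * ω) * ∑ i ∈ Finset.Icc (0:ℤ) N, r ^ (N - i).toNat := by
        rw [Finset.mul_sum]
    _ = Real.exp (κ * ω) * ∑ n ∈ Finset.range ((N+1).toNat), r ^ n := by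
        congr 1
        apply Finset.sum_nbij' (fun i => (N - i).toNat) (fun n => N - (n:ℤ))
        · intro a ha
          simp only [Finset.mem_Icc] at ha
          simp only [Finset.mem_range]
          omega
        · intro a ha
          simp only [Finset.mem_range] at ha
          simp only [Finset.mem_Icc]
          omega
        · intro a ha
          simp only [Finset.mem_Icc] at ha
          omega
        · intro a ha
          simp only [Finset.mem_range] at ha
          omega
        · intro a _; rfl
    _ ≤ Real.exp (κ * ω) * ∑' n : ℕ, r ^ n := by
        apply mul_le_mul_of_nonneg_left _ (Real.exp_nonneg _)
        exact Summable.sum_le_tsum _ (fun n _ => pow_nonneg hr0 n)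
          (summable_geometric_of_lt_one hr0 hr1)
    _ = Real.exp (κ * ω) / (1 - r) := by
        rw [tsum_geometric_of_lt_one hr0 hr1, div_eq_mul_inv]

end helpers

set_option maxHeartbeats 1000000 in
/-- Theorem 3, uniform exponential stability, integral-equation form: under
the vanishing-at-zero and Lipschitz conditions on `w₀, w_j, u₀` and the smallness
conditions `Λ_σ < 1` and `Λ₀ < 1`, for every `ε > 0` there is `δ > 0` such that every
bounded measurable fixed point `v = Πv` on `[0,∞)` (with initial vector `v(0)`) satisfying
`‖v(0)‖ < δ` obeys `‖v(t)‖ ≤ ε·e^{−σt}` for all `t ≥ 0`. -/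


theorem stmt14
    (m : ℕ) (hm : 1 ≤ m) (ω : ℝ) (hω : 0 < ω) (θ : ℤ → ℝ)
    (hθ : ∀ i : ℤ, (i : ℝ) * ω ≤ θ i ∧ θ i < ((i : ℝ) + 1) * ω)
    (k : Fin (m + 1) → ℝ) (hk : ∀ j, 0 < k j)
    (l : Fin (m + 1) → ℝ) (lJ : ℝ) (hl : ∀ j, 0 ≤ l j) (hlJ : 0 ≤ lJ)
    (w₀ : (Fin (m + 1) → ℝ) → ℝ) (w : Fin (m + 1) → ℝ → ℝ → ℝ) (u₀ : ℝ → ℝ)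
    (hw₀meas : Measurable w₀) (hwmeas : ∀ j, Measurable fun p : ℝ × ℝ => w j p.1 p.2)
    (hu₀meas : Measurable u₀)
    (σ : ℝ) (hσ : 0 < σ) (hσk : ∀ j, σ < k j)
    (hw₀0 : w₀ 0 = 0) (hw0 : ∀ j, j ≠ 0 → w j 0 0 = 0) (hu₀0 : u₀ 0 = 0)
    (hw₀lip : ∀ v v' : Fin (m + 1) → ℝ,
      |w₀ v - w₀ v'| ≤ l 0 * Real.sqrt (2 * m) * eNorm (fun j => v j - v' j))
    (hwlip : ∀ j, j ≠ 0 → ∀ a a' b b' : ℝ,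
      |w j a b - w j a' b'| ≤ l j * (|a - a'| + |b - b'|))
    (hu₀lip : ∀ z z' : ℝ, |u₀ z - u₀ z'| ≤ lJ * |z - z'|)
    (hΛσ : Real.sqrt ((l 0 * Real.sqrt (2 * m) / (k 0 - σ) + lJ * Real.exp ((k 0 - σ) * ω) / (1 - Real.exp (-((k 0 - σ) * ω)))) ^ 2 +
      ∑ i : Fin m, (2 * l i.succ / (k i.succ - σ)) ^ 2) < 1)
    (hΛ0 : Real.sqrt ((l 0 * Real.sqrt (2 * m) / k 0 + lJ * Real.exp (k 0 * ω) / (1 - Real.exp (-(k 0 * ω)))) ^ 2 +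
      ∑ i : Fin m, (2 * l i.succ / k i.succ) ^ 2) < 1) :
    ∀ ε : ℝ, 0 < ε → ∃ δ : ℝ, 0 < δ ∧
      ∀ v : ℝ → Fin (m + 1) → ℝ, Measurable v → (∃ B, ∀ t, eNorm (v t) ≤ B) →
        (∀ t : ℝ, 0 ≤ t → v t = PiOp m θ k w₀ w u₀ (v 0) v t) →
        eNorm (v 0) < δ →
        ∀ t : ℝ, 0 ≤ t → eNorm (v t) ≤ ε * Real.exp (-σ * t) := by
  intro ε hε
  have hκ0 : 0 < k 0 - σ := by have := hσk 0; linarith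
  set Λ : ℝ := Real.sqrt ((l 0 * Real.sqrt (2 * m) / (k 0 - σ) +
      lJ * Real.exp ((k 0 - σ) * ω) / (1 - Real.exp (-((k 0 - σ) * ω)))) ^ 2 +
      ∑ i : Fin m, (2 * l i.succ / (k i.succ - σ)) ^ 2) with hΛdef
  have hΛnn : 0 ≤ Λ := Real.sqrt_nonneg _
  have hΛ1 : Λ < 1 := hΛσ
  have hden : 0 < 1 - Real.exp (-((k 0 - σ) * ω)) := by
    have : Real.exp (-((k 0 - σ) * ω)) < 1 := Real.exp_lt_one_iff.2 (by nlinarith)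
    linarith
  set c : Fin (m + 1) → ℝ := fun j => if j = 0 then
      l 0 * Real.sqrt (2 * m) / (k 0 - σ) +
        lJ * Real.exp ((k 0 - σ) * ω) / (1 - Real.exp (-((k 0 - σ) * ω)))
    else 2 * l j / (k j - σ) with hcdef
  have hcnn : ∀ j, 0 ≤ c j := by
    intro j
    simp only [hcdef]
    split_ifs with hj
    · have h1 : 0 ≤ l 0 * Real.sqrt (2 * m) / (k 0 - σ) :=
        div_nonneg (mul_nonneg (hl 0) (Real.sqrt_nonneg _)) hκ0.le
      have h2 : 0 ≤ lJ * Real.exp ((k 0 - σ) * ω) / (1 - Real.exp (-((k 0 - σ) * ω)))  := by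
        apply div_nonneg _ hden.le
        exact mul_nonneg hlJ (Real.exp_nonneg _)
      linarith
    · have h3 : 0 < k j - σ := by have := hσk j; linarith
      exact div_nonneg (mul_nonneg (by norm_num) (hl j)) h3.le
  have hΛc : eNorm c = Λ := by
    have hsum : ∑ j, c j ^ 2 = (l 0 * Real.sqrt (2 * m) / (k 0 - σ) +
        lJ * Real.exp ((k 0 - σ) * ω) / (1 - Real.exp (-((k 0 - σ) * ω)))) ^ 2 +
        ∑ i : Fin m, (2 * l i.succ / (k i.succ - σ)) ^ 2 := by
      rw [Fin.sum_univ_succ]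
      simp [hcdef, Fin.succ_ne_zero]
    rw [eNorm, hsum, hΛdef]
  refine ⟨ε * (1 - Λ), mul_pos hε (by linarith), ?_⟩
  rintro v hv ⟨B, hB⟩ hfix h0 t ht
  have hBnn : 0 ≤ B := le_trans (eNorm_nonneg _) (hB 0)
  set S : ℝ := sSup ((fun s => Real.exp (σ * s) * eNorm (v s)) '' Set.Icc 0 t) with hSdef
  have hbdd : BddAbove ((fun s => Real.exp (σ * s) * eNorm (v s)) '' Set.Icc 0 t) := by
    refine ⟨Real.exp (σ * t) * B, ?_⟩
    rintro x ⟨s, hs, rfl⟩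
    exact mul_le_mul (Real.exp_le_exp.2 (by nlinarith [hs.2])) (hB s) (eNorm_nonneg _)
      (Real.exp_nonneg _)
  have hne : ((fun s => Real.exp (σ * s) * eNorm (v s)) '' Set.Icc 0 t).Nonempty :=
    ⟨_, ⟨0, ⟨le_refl 0, ht⟩, rfl⟩⟩
  have hmem : ∀ s ∈ Set.Icc (0:ℝ) t, Real.exp (σ * s) * eNorm (v s) ≤ S :=
    fun s hs => le_csSup hbdd ⟨s, hs, rfl⟩
  have hS0 : 0 ≤ S := le_trans (mul_nonneg (Real.exp_nonneg _) (eNorm_nonneg _)) (hmem 0 ⟨le_refl 0, ht⟩)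
  have hvs : ∀ s, 0 ≤ s → s ≤ t → eNorm (v s) ≤ Real.exp (-(σ * s)) * S := by
    intro s hs0 hst
    have h1 := hmem s ⟨hs0, hst⟩
    have h2 : Real.exp (-(σ * s)) * (Real.exp (σ * s) * eNorm (v s)) ≤ Real.exp (-(σ * s)) * S :=
      mul_le_mul_of_nonneg_left h1 (Real.exp_nonneg _)
    calc eNorm (v s) = Real.exp (-(σ * s)) * (Real.exp (σ * s) * eNorm (v s)) := by
          rw [← mul_assoc, ← Real.exp_add]; simp
    _ ≤ Real.exp (-(σ * s)) * S := h2
  -- key estimate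
  have key : ∀ τ ∈ Set.Icc (0:ℝ) t,
      Real.exp (σ * τ) * eNorm (v τ) ≤ eNorm (v 0) + Λ * S := by
    rintro τ ⟨hτ0, hτt⟩
    have hcoord : ∀ j, |v τ j| ≤ Real.exp (-(σ * τ)) * |v 0 j| +
        Real.exp (-(σ * τ)) * (S * c j) := by
      intro j
      have hfx := congrFun (hfix τ hτ0) j
      by_cases hj : j = 0
      · subst hj
        rw [hfx]
        simp only [PiOp, if_true]
        have hL : (0:ℝ) ≤ l 0 * Real.sqrt (2 * m) := mul_nonneg (hl 0) (Real.sqrt_nonneg _)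
        have hwabs : ∀ x : Fin (m + 1) → ℝ, |w₀ x| ≤ l 0 * Real.sqrt (2 * m) * eNorm x := by
          intro x
          have h1 : |w₀ x| = |w₀ x - w₀ 0| := by rw [hw₀0, sub_zero]
          have h2 : (fun j => x j - (0 : Fin (m + 1) → ℝ) j) = x := by funext j; simp
          rw [h1]
          calc |w₀ x - w₀ 0| ≤ l 0 * Real.sqrt (2 * m) *
                eNorm (fun j => x j - (0 : Fin (m + 1) → ℝ) j) := hw₀lip x 0
          _ = l 0 * Real.sqrt (2 * m) * eNorm x := by rw [h2]
        have hw0b : ∀ s, 0 ≤ s → s ≤ τ → |w₀ (v s)| ≤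
            l 0 * Real.sqrt (2 * m) * (Real.exp (-(σ * s)) * S) := by
          intro s hs0 hsτ
          calc |w₀ (v s)| ≤ l 0 * Real.sqrt (2 * m) * eNorm (v s) := hwabs (v s)
          _ ≤ l 0 * Real.sqrt (2 * m) * (Real.exp (-(σ * s)) * S) :=
              mul_le_mul_of_nonneg_left (hvs s hs0 (hsτ.trans hτt)) hL
        have hmeasf : Measurable (fun s => Real.exp (-(k 0) * (τ - s)) * w₀ (v s)) := by
          apply Measurable.mul
          · exact Real.measurable_exp.comp ((measurable_const.sub measurable_id).const_mul _)
          · exact hw₀meas.comp hv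
        have hif : IntervalIntegrable (fun s => Real.exp (-(k 0) * (τ - s)) * w₀ (v s))
            MeasureTheory.volume 0 τ := by
          apply intInt_of_bound _ hmeasf 0 τ (l 0 * Real.sqrt (2 * m) * B)
          intro s hs
          rw [Set.uIoc_of_le hτ0] at hs
          rw [abs_mul, Real.abs_exp]
          have he1 : Real.exp (-(k 0) * (τ - s)) ≤ 1 := by
            rw [Real.exp_le_one_iff]
            nlinarith [hk 0, hs.1, hs.2]
          have hw1 : |w₀ (v s)| ≤ l 0 * Real.sqrt (2 * m) * B :=
            (hwabs (v s)).trans (mul_le_mul_of_nonneg_left (hB s) hL)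
          calc Real.exp (-(k 0) * (τ - s)) * |w₀ (v s)|
              ≤ 1 * (l 0 * Real.sqrt (2 * m) * B) :=
                mul_le_mul he1 hw1 (abs_nonneg _) zero_le_one
          _ = l 0 * Real.sqrt (2 * m) * B := one_mul _
        have hIbound : |∫ s in (0:ℝ)..τ, Real.exp (-(k 0) * (τ - s)) * w₀ (v s)|
            ≤ l 0 * Real.sqrt (2 * m) * S * (Real.exp (-σ * τ) / (k 0 - σ)) := by
          calc |∫ s in (0:ℝ)..τ, Real.exp (-(k 0) * (τ - s)) * w₀ (v s)|
              ≤ ∫ s in (0:ℝ)..τ, |Real.exp (-(k 0) * (τ - s)) * w₀ (v s)| :=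
                intervalIntegral.abs_integral_le_integral_abs hτ0
          _ ≤ ∫ s in (0:ℝ)..τ, (l 0 * Real.sqrt (2 * m) * S) *
                (Real.exp (-(k 0) * (τ - s)) * Real.exp (-σ * s)) := by
              apply intervalIntegral.integral_mono_on hτ0 hif.abs
              · apply Continuous.intervalIntegrable
                fun_prop
              · intro s hs
                rw [abs_mul, Real.abs_exp]
                calc Real.exp (-(k 0) * (τ - s)) * |w₀ (v s)|
                    ≤ Real.exp (-(k 0) * (τ - s)) *
                        (l 0 * Real.sqrt (2 * m) * (Real.exp (-(σ * s)) * S)) :=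
                      mul_le_mul_of_nonneg_left (hw0b s hs.1 hs.2) (Real.exp_nonneg _)
                _ = (l 0 * Real.sqrt (2 * m) * S) *
                      (Real.exp (-(k 0) * (τ - s)) * Real.exp (-σ * s)) := by
                      rw [neg_mul σ s]; ring
          _ = (l 0 * Real.sqrt (2 * m) * S) * ∫ s in (0:ℝ)..τ,
                Real.exp (-(k 0) * (τ - s)) * Real.exp (-σ * s) :=
              intervalIntegral.integral_const_mul _ _
          _ ≤ l 0 * Real.sqrt (2 * m) * S * (Real.exp (-σ * τ) / (k 0 - σ)) :=
              mul_le_mul_of_nonneg_left (int_exp_bound (k 0) σ τ (hσk 0) hτ0)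
                (mul_nonneg hL hS0)
        -- the jump sum
        have hsupp : ∀ i ∉ Finset.Icc (0:ℤ) (⌈τ/ω⌉ - 1),
            (if 0 ≤ θ i ∧ θ i < τ then Real.exp (-(k 0) * (τ - θ i)) * u₀ (v (θ i) 0) else 0)
              = 0 := fun i hi => if_neg (theta_notmem ω hω θ hθ τ i hi)
        have hts : (∑' i : ℤ, (if 0 ≤ θ i ∧ θ i < τ then
              Real.exp (-(k 0) * (τ - θ i)) * u₀ (v (θ i) 0) else 0))
            = ∑ i ∈ Finset.Icc (0:ℤ) (⌈τ/ω⌉ - 1), (if 0 ≤ θ i ∧ θ i < τ then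
              Real.exp (-(k 0) * (τ - θ i)) * u₀ (v (θ i) 0) else 0) := tsum_eq_sum hsupp
        have hperterm : ∀ i ∈ Finset.Icc (0:ℤ) (⌈τ/ω⌉ - 1),
            |if 0 ≤ θ i ∧ θ i < τ then Real.exp (-(k 0) * (τ - θ i)) * u₀ (v (θ i) 0) else 0|
              ≤ (lJ * S * Real.exp (-(σ * τ))) *
                (if 0 ≤ θ i ∧ θ i < τ then Real.exp (-(k 0 - σ) * (τ - θ i)) else 0) := by
          intro i _
          split_ifs with hcond
          · obtain ⟨h0i, hlti⟩ := hcond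
            have hu : |u₀ (v (θ i) 0)| ≤ lJ * (Real.exp (-(σ * θ i)) * S) := by
              have h1 : |u₀ (v (θ i) 0)| = |u₀ (v (θ i) 0) - u₀ 0| := by rw [hu₀0, sub_zero]
              rw [h1]
              calc |u₀ (v (θ i) 0) - u₀ 0| ≤ lJ * |v (θ i) 0 - 0| := hu₀lip _ 0
              _ = lJ * |v (θ i) 0| := by rw [sub_zero]
              _ ≤ lJ * eNorm (v (θ i)) :=
                  mul_le_mul_of_nonneg_left (abs_le_eNorm _ _) hlJ
              _ ≤ lJ * (Real.exp (-(σ * θ i)) * S) :=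
                  mul_le_mul_of_nonneg_left (hvs _ h0i (hlti.le.trans hτt)) hlJ
            have hexp : Real.exp (-(k 0) * (τ - θ i)) * Real.exp (-(σ * θ i)) =
                Real.exp (-(σ * τ)) * Real.exp (-(k 0 - σ) * (τ - θ i)) := by
              rw [← Real.exp_add, ← Real.exp_add]; ring_nf
            calc |Real.exp (-(k 0) * (τ - θ i)) * u₀ (v (θ i) 0)|
                = Real.exp (-(k 0) * (τ - θ i)) * |u₀ (v (θ i) 0)| := by
                  rw [abs_mul, Real.abs_exp]
            _ ≤ Real.exp (-(k 0) * (τ - θ i)) * (lJ * (Real.exp (-(σ * θ i)) * S)) :=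
                  mul_le_mul_of_nonneg_left hu (Real.exp_nonneg _)
            _ = (lJ * S) * (Real.exp (-(k 0) * (τ - θ i)) * Real.exp (-(σ * θ i))) := by ring
            _ = (lJ * S) * (Real.exp (-(σ * τ)) * Real.exp (-(k 0 - σ) * (τ - θ i))) := by
                  rw [hexp]
            _ = (lJ * S * Real.exp (-(σ * τ))) * Real.exp (-(k 0 - σ) * (τ - θ i)) := by ring
          · simp
        have hJbound : |∑' i : ℤ, (if 0 ≤ θ i ∧ θ i < τ then
              Real.exp (-(k 0) * (τ - θ i)) * u₀ (v (θ i) 0) else 0)|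
            ≤ lJ * S * Real.exp (-(σ * τ)) *
              (Real.exp ((k 0 - σ) * ω) / (1 - Real.exp (-((k 0 - σ) * ω)))) := by
          rw [hts]
          calc |∑ i ∈ Finset.Icc (0:ℤ) (⌈τ/ω⌉ - 1), (if 0 ≤ θ i ∧ θ i < τ then
                Real.exp (-(k 0) * (τ - θ i)) * u₀ (v (θ i) 0) else 0)|
              ≤ ∑ i ∈ Finset.Icc (0:ℤ) (⌈τ/ω⌉ - 1), |if 0 ≤ θ i ∧ θ i < τ then
                Real.exp (-(k 0) * (τ - θ i)) * u₀ (v (θ i) 0) else 0| :=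
                Finset.abs_sum_le_sum_abs _ _
          _ ≤ ∑ i ∈ Finset.Icc (0:ℤ) (⌈τ/ω⌉ - 1), (lJ * S * Real.exp (-(σ * τ))) *
                (if 0 ≤ θ i ∧ θ i < τ then Real.exp (-(k 0 - σ) * (τ - θ i)) else 0) :=
              Finset.sum_le_sum hperterm
          _ = (lJ * S * Real.exp (-(σ * τ))) * ∑ i ∈ Finset.Icc (0:ℤ) (⌈τ/ω⌉ - 1),
                (if 0 ≤ θ i ∧ θ i < τ then Real.exp (-(k 0 - σ) * (τ - θ i)) else 0) := by
              rw [← Finset.mul_sum]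
          _ ≤ lJ * S * Real.exp (-(σ * τ)) *
                (Real.exp ((k 0 - σ) * ω) / (1 - Real.exp (-((k 0 - σ) * ω)))) := by
              apply mul_le_mul_of_nonneg_left (theta_sum_bound ω hω θ hθ (k 0 - σ) τ hκ0)
              exact mul_nonneg (mul_nonneg hlJ hS0) (Real.exp_nonneg _)
        calc |Real.exp (-(k 0) * τ) * v 0 0 +
              (∫ s in (0:ℝ)..τ, Real.exp (-(k 0) * (τ - s)) * w₀ (v s)) +
              ∑' i : ℤ, (if 0 ≤ θ i ∧ θ i < τ then
                Real.exp (-(k 0) * (τ - θ i)) * u₀ (v (θ i) 0) else 0)|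
            ≤ |Real.exp (-(k 0) * τ) * v 0 0 +
              (∫ s in (0:ℝ)..τ, Real.exp (-(k 0) * (τ - s)) * w₀ (v s))| +
              |∑' i : ℤ, (if 0 ≤ θ i ∧ θ i < τ then
                Real.exp (-(k 0) * (τ - θ i)) * u₀ (v (θ i) 0) else 0)| := abs_add_le _ _
        _ ≤ |Real.exp (-(k 0) * τ) * v 0 0| +
              |∫ s in (0:ℝ)..τ, Real.exp (-(k 0) * (τ - s)) * w₀ (v s)| +
              |∑' i : ℤ, (if 0 ≤ θ i ∧ θ i < τ then
                Real.exp (-(k 0) * (τ - θ i)) * u₀ (v (θ i) 0) else 0)| :=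
            add_le_add_left (abs_add_le _ _) _
        _ ≤ Real.exp (-(σ * τ)) * |v 0 0| +
              l 0 * Real.sqrt (2 * m) * S * (Real.exp (-σ * τ) / (k 0 - σ)) +
              lJ * S * Real.exp (-(σ * τ)) *
                (Real.exp ((k 0 - σ) * ω) / (1 - Real.exp (-((k 0 - σ) * ω)))) := by
            apply add_le_add (add_le_add _ hIbound) hJbound
            rw [abs_mul, Real.abs_exp]
            apply mul_le_mul_of_nonneg_right _ (abs_nonneg _)
            apply Real.exp_le_exp.2
            nlinarith [hσk 0]
        _ = Real.exp (-(σ * τ)) * |v 0 0| + Real.exp (-(σ * τ)) * (S * c 0) := by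
            simp only [hcdef, if_true]
            rw [neg_mul σ τ]
            ring
      · -- coordinate j ≠ 0
        rw [hfx]
        simp only [PiOp, if_neg hj]
        have hkj : σ < k j := hσk j
        have hwb : ∀ s, 0 ≤ s → s ≤ τ → |w j (v s 0) (v s j)| ≤
            2 * l j * (Real.exp (-(σ * s)) * S) := by
          intro s hs0 hsτ
          have h1 : |w j (v s 0) (v s j)| = |w j (v s 0) (v s j) - w j 0 0| := by
            rw [hw0 j hj, sub_zero]
          rw [h1]
          calc |w j (v s 0) (v s j) - w j 0 0| ≤ l j * (|v s 0 - 0| + |v s j - 0|) :=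
                hwlip j hj _ 0 _ 0
          _ = l j * (|v s 0| + |v s j|) := by rw [sub_zero, sub_zero]
          _ ≤ l j * (eNorm (v s) + eNorm (v s)) := by
                apply mul_le_mul_of_nonneg_left (add_le_add (abs_le_eNorm _ _)
                  (abs_le_eNorm _ _)) (hl j)
          _ ≤ 2 * l j * (Real.exp (-(σ * s)) * S) := by
                have := hvs s hs0 (hsτ.trans hτt)
                nlinarith [hl j, eNorm_nonneg (v s)]
        have hmeasf : Measurable (fun s => Real.exp (-(k j) * (τ - s)) * w j (v s 0) (v s j)) := by
          apply Measurable.mul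
          · exact Real.measurable_exp.comp ((measurable_const.sub measurable_id).const_mul _)
          · exact (hwmeas j).comp (((measurable_pi_apply 0).comp hv).prodMk
              ((measurable_pi_apply j).comp hv))
        have hif : IntervalIntegrable (fun s => Real.exp (-(k j) * (τ - s)) * w j (v s 0) (v s j))
            MeasureTheory.volume 0 τ := by
          apply intInt_of_bound _ hmeasf 0 τ (l j * (2 * B))
          intro s hs
          rw [Set.uIoc_of_le hτ0] at hs
          rw [abs_mul, Real.abs_exp]
          have he1 : Real.exp (-(k j) * (τ - s)) ≤ 1 := by
            rw [Real.exp_le_one_iff]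
            nlinarith [hk j, hs.1, hs.2]
          have hw1 : |w j (v s 0) (v s j)| ≤ l j * (2 * B) := by
            have h1 : |w j (v s 0) (v s j)| = |w j (v s 0) (v s j) - w j 0 0| := by
              rw [hw0 j hj, sub_zero]
            rw [h1]
            calc |w j (v s 0) (v s j) - w j 0 0| ≤ l j * (|v s 0 - 0| + |v s j - 0|) :=
                  hwlip j hj _ 0 _ 0
            _ = l j * (|v s 0| + |v s j|) := by rw [sub_zero, sub_zero]
            _ ≤ l j * (2 * B) := by
                  apply mul_le_mul_of_nonneg_left _ (hl j)
                  have := (abs_le_eNorm (v s) 0).trans (hB s)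
                  have := (abs_le_eNorm (v s) j).trans (hB s)
                  linarith
          calc Real.exp (-(k j) * (τ - s)) * |w j (v s 0) (v s j)|
              ≤ 1 * (l j * (2 * B)) := by
                apply mul_le_mul he1 hw1 (abs_nonneg _) zero_le_one
          _ = l j * (2 * B) := one_mul _
        have hIbound : |∫ s in (0:ℝ)..τ, Real.exp (-(k j) * (τ - s)) * w j (v s 0) (v s j)|
            ≤ 2 * l j * S * (Real.exp (-σ * τ) / (k j - σ)) := by
          calc |∫ s in (0:ℝ)..τ, Real.exp (-(k j) * (τ - s)) * w j (v s 0) (v s j)|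
              ≤ ∫ s in (0:ℝ)..τ, |Real.exp (-(k j) * (τ - s)) * w j (v s 0) (v s j)| :=
                intervalIntegral.abs_integral_le_integral_abs hτ0
          _ ≤ ∫ s in (0:ℝ)..τ, (2 * l j * S) *
                (Real.exp (-(k j) * (τ - s)) * Real.exp (-σ * s)) := by
              apply intervalIntegral.integral_mono_on hτ0 hif.abs
              · apply Continuous.intervalIntegrable
                fun_prop
              · intro s hs
                rw [abs_mul, Real.abs_exp]
                calc Real.exp (-(k j) * (τ - s)) * |w j (v s 0) (v s j)|
                    ≤ Real.exp (-(k j) * (τ - s)) * (2 * l j * (Real.exp (-(σ * s)) * S)) :=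
                      mul_le_mul_of_nonneg_left (hwb s hs.1 hs.2) (Real.exp_nonneg _)
                _ = (2 * l j * S) * (Real.exp (-(k j) * (τ - s)) * Real.exp (-σ * s)) := by
                      rw [neg_mul σ s]; ring
          _ = (2 * l j * S) * ∫ s in (0:ℝ)..τ,
                Real.exp (-(k j) * (τ - s)) * Real.exp (-σ * s) :=
              intervalIntegral.integral_const_mul _ _
          _ ≤ (2 * l j * S) * (Real.exp (-σ * τ) / (k j - σ)) := by
              exact mul_le_mul_of_nonneg_left (int_exp_bound (k j) σ τ hkj hτ0)
                (mul_nonneg (mul_nonneg (by norm_num) (hl j)) hS0)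
          _ = 2 * l j * S * (Real.exp (-σ * τ) / (k j - σ)) := by ring
        calc |Real.exp (-(k j) * τ) * v 0 j +
              ∫ s in (0:ℝ)..τ, Real.exp (-(k j) * (τ - s)) * w j (v s 0) (v s j)|
            ≤ |Real.exp (-(k j) * τ) * v 0 j| +
              |∫ s in (0:ℝ)..τ, Real.exp (-(k j) * (τ - s)) * w j (v s 0) (v s j)| := abs_add_le _ _
        _ ≤ Real.exp (-(σ * τ)) * |v 0 j| + 2 * l j * S * (Real.exp (-σ * τ) / (k j - σ)) := by
            apply add_le_add _ hIbound
            rw [abs_mul, Real.abs_exp]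
            apply mul_le_mul_of_nonneg_right _ (abs_nonneg _)
            apply Real.exp_le_exp.2
            nlinarith [hσk j]
        _ = Real.exp (-(σ * τ)) * |v 0 j| + Real.exp (-(σ * τ)) * (S * c j) := by
            simp only [hcdef]
            simp only [if_neg hj]
            rw [neg_mul σ τ]
            ring
    -- assemble
    have h1 : eNorm (v τ) ≤ eNorm (fun j => Real.exp (-(σ * τ)) * |v 0 j|) +
        eNorm (fun j => Real.exp (-(σ * τ)) * (S * c j)) :=
      eNorm_le_add _ _ _ hcoord
    have h2 : eNorm (fun j => Real.exp (-(σ * τ)) * |v 0 j|) =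
        Real.exp (-(σ * τ)) * eNorm (v 0) := by
      rw [eNorm_smul, Real.abs_exp, eNorm_abs]
    have h3 : eNorm (fun j => Real.exp (-(σ * τ)) * (S * c j)) =
        Real.exp (-(σ * τ)) * (S * Λ) := by
      rw [eNorm_smul, Real.abs_exp]
      congr 1
      rw [eNorm_smul, abs_of_nonneg hS0, hΛc]
    rw [h2, h3] at h1
    have hee : Real.exp (σ * τ) * Real.exp (-(σ * τ)) = 1 := by
      rw [← Real.exp_add]; simp
    calc Real.exp (σ * τ) * eNorm (v τ)
        ≤ Real.exp (σ * τ) * (Real.exp (-(σ * τ)) * eNorm (v 0) +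
            Real.exp (-(σ * τ)) * (S * Λ)) := mul_le_mul_of_nonneg_left h1 (Real.exp_nonneg _)
    _ = (Real.exp (σ * τ) * Real.exp (-(σ * τ))) * eNorm (v 0) +
          (Real.exp (σ * τ) * Real.exp (-(σ * τ))) * (S * Λ) := by ring
    _ = eNorm (v 0) + Λ * S := by rw [hee]; ring
  have hSle : S ≤ eNorm (v 0) + Λ * S := by
    apply csSup_le hne
    rintro x ⟨s, hs, rfl⟩
    exact key s hs
  have hSlt : S < ε := by nlinarith
  have hfinal := hmem t ⟨ht, le_refl t⟩
  have h5 : eNorm (v t) = Real.exp (-(σ * t)) * (Real.exp (σ * t) * eNorm (v t)) := by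
    rw [← mul_assoc, ← Real.exp_add]; simp
  rw [h5]
  calc Real.exp (-(σ * t)) * (Real.exp (σ * t) * eNorm (v t))
      ≤ Real.exp (-(σ * t)) * ε :=
        mul_le_mul_of_nonneg_left (hfinal.trans hSlt.le) (Real.exp_nonneg _)
  _ = ε * Real.exp (-σ * t) := by rw [neg_mul]; ring
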